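/- arXiv:0806.2587 — 6 statements merged into one kernel-verified Lean document; each statement's English description precedes it below -/
import Mathlib

section
/- Let w > 0 be real, z ∈ ℂ, and let x, y ∈ ℂ satisfy |x|^2 + |y|^2 = 1. Set T = [[w, z],[0, w^{-1}]] and U = [[x, -conj(y)],[y, conj(x)]] ∈ SU(2). Then there exist U' ∈ SU(2), a real number w' > 0 and z' ∈ ℂ with T·U = U'·[[w', z'],[0, w'^{-1}]], and these are uniquely determined, with w' = sqrt(w^{-2}|y|^2 + |wx + zy|^2) and w'·z' = (w·conj(x) + conj(z)·conj(y))·(z·conj(x) - w·conj(y)) + w^{-2}·conj(x)·conj(y). (This is the explicit formula for the dressing action of SU(2) on SU₂⋆.) -/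
open Matrix Complex

/-- **The dressing action of SU(2) on SU₂⋆**: for `T = [[w,z],[0,w⁻¹]]` with `w > 0` and
`U = [[x, -conj y],[y, conj x]] ∈ SU(2)` (so `|x|² + |y|² = 1`), there exist a unique
`U' ∈ SU(2)`, `w' > 0` real and `z' ∈ ℂ` with `T·U = U'·[[w',z'],[0,w'⁻¹]]`, and moreover
`w' = sqrt(w⁻²|y|² + |wx + zy|²)` and
`w'·z' = (w·conj x + conj z·conj y)(z·conj x − w·conj y) + w⁻²·conj x·conj y`. -/
theorem dressing_action_su2
    (w : ℝ) (hw : 0 < w) (z x y : ℂ) (hxy : Complex.normSq x + Complex.normSq y = 1) :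
    ∃ (U' : Matrix (Fin 2) (Fin 2) ℂ) (w' : ℝ) (z' : ℂ),
      0 < w' ∧ U'ᴴ * U' = 1 ∧ U'.det = 1 ∧
      !![(w : ℂ), z; 0, (w : ℂ)⁻¹] * !![x, -(starRingEnd ℂ) y; y, (starRingEnd ℂ) x]
        = U' * !![(w' : ℂ), z'; 0, (w' : ℂ)⁻¹] ∧
      w' = Real.sqrt (w ^ (-2 : ℤ) * Complex.normSq y + Complex.normSq ((w : ℂ) * x + z * y)) ∧
      (w' : ℂ) * z' =
        ((w : ℂ) * (starRingEnd ℂ) x + (starRingEnd ℂ) z * (starRingEnd ℂ) y) *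
            (z * (starRingEnd ℂ) x - (w : ℂ) * (starRingEnd ℂ) y)
          + ((w : ℂ)) ^ (-2 : ℤ) * (starRingEnd ℂ) x * (starRingEnd ℂ) y ∧
      ∀ (U'' : Matrix (Fin 2) (Fin 2) ℂ) (w'' : ℝ) (z'' : ℂ),
        0 < w'' → U''ᴴ * U'' = 1 → U''.det = 1 →
        !![(w : ℂ), z; 0, (w : ℂ)⁻¹] * !![x, -(starRingEnd ℂ) y; y, (starRingEnd ℂ) x]
          = U'' * !![(w'' : ℂ), z''; 0, (w'' : ℂ)⁻¹] →
        U'' = U' ∧ w'' = w' ∧ z'' = z' := by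
  have hwne : w ≠ 0 := hw.ne'
  have hw0 : (w:ℂ) ≠ 0 := by exact_mod_cast hwne
  have hW2pos : 0 < w ^ (-2 : ℤ) * Complex.normSq y + Complex.normSq ((w : ℂ) * x + z * y) := by
    rcases eq_or_ne y 0 with hy | hy
    · have hx : Complex.normSq x = 1 := by simpa [hy] using hxy
      have h1 : Complex.normSq ((w:ℂ) * x + z * y) = w^2 := by
        simp [hy, Complex.normSq_mul, Complex.normSq_ofReal, hx]; ring
      have h2 : (0:ℝ) ≤ w ^ (-2:ℤ) * Complex.normSq y :=
        mul_nonneg (by positivity) (Complex.normSq_nonneg y)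
      have h3 : (0:ℝ) < w^2 := by positivity
      linarith [h1]
    · have h1 : 0 < Complex.normSq y := Complex.normSq_pos.2 hy
      have h2 : (0:ℝ) < w ^ (-2:ℤ) := by positivity
      have h3 := Complex.normSq_nonneg ((w:ℂ) * x + z * y)
      nlinarith
  obtain ⟨w', hw'def⟩ : ∃ v : ℝ,
      v = Real.sqrt (w ^ (-2 : ℤ) * Complex.normSq y + Complex.normSq ((w : ℂ) * x + z * y)) :=
    ⟨_, rfl⟩
  have hw'pos : 0 < w' := hw'def ▸ Real.sqrt_pos.2 hW2pos
  have hw'sq : w' ^ 2 = w ^ (-2 : ℤ) * Complex.normSq y + Complex.normSq ((w : ℂ) * x + z * y) :=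
    hw'def ▸ Real.sq_sqrt hW2pos.le
  have hw'ne : w' ≠ 0 := hw'pos.ne'
  have hw'0 : (w':ℂ) ≠ 0 := by exact_mod_cast hw'ne
  have hxyC : (starRingEnd ℂ) x * x + (starRingEnd ℂ) y * y = 1 := by
    have h1 := Complex.mul_conj x
    have h2 := Complex.mul_conj y
    have : ((Complex.normSq x + Complex.normSq y : ℝ) : ℂ) = 1 := by rw [hxy]; norm_num
    push_cast at this
    linear_combination h1 + h2 + this
  have hzpow : ((w:ℂ))^(-2:ℤ) = ((w:ℂ)⁻¹)^2 := by
    rw [_root_.zpow_neg, inv_pow]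
    norm_num
  have hw2C' : (w':ℂ)^2 = ((w:ℂ)⁻¹)^2 * ((starRingEnd ℂ) y * y) +
      ((w:ℂ)*x + z*y) * ((w:ℂ)*(starRingEnd ℂ) x + (starRingEnd ℂ) z * (starRingEnd ℂ) y) := by
    have h1 : ((w'^2 : ℝ) : ℂ) =
        ((w ^ (-2 : ℤ) * Complex.normSq y + Complex.normSq ((w : ℂ) * x + z * y) : ℝ) : ℂ) := by
      rw [hw'sq]
    have h2 := Complex.mul_conj y
    have h3 := Complex.mul_conj ((w:ℂ)*x + z*y)
    push_cast at h1
    rw [hzpow] at h1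
    simp only [_root_.map_mul, map_add, Complex.conj_ofReal] at h3
    linear_combination h1 - ((w:ℂ)⁻¹)^2 * h2 - h3
  have hw2C : (w':ℂ)^2 * (w:ℂ)^2 =
      (starRingEnd ℂ) y * y +
        ((w:ℂ)*x + z*y) * ((w:ℂ)*(starRingEnd ℂ) x + (starRingEnd ℂ) z * (starRingEnd ℂ) y) * (w:ℂ)^2 := by
    have h := hw2C'
    field_simp at h
    linear_combination h
  obtain ⟨a, ha⟩ : ∃ v : ℂ, v = ((w:ℂ)*x + z*y) / w' := ⟨_, rfl⟩
  obtain ⟨b, hb⟩ : ∃ v : ℂ, v = y / ((w:ℂ) * w') := ⟨_, rfl⟩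
  obtain ⟨z', hz'⟩ : ∃ v : ℂ, v = (((w : ℂ) * (starRingEnd ℂ) x + (starRingEnd ℂ) z * (starRingEnd ℂ) y) *
            (z * (starRingEnd ℂ) x - (w : ℂ) * (starRingEnd ℂ) y)
          + ((w : ℂ)) ^ (-2 : ℤ) * (starRingEnd ℂ) x * (starRingEnd ℂ) y) / w' := ⟨_, rfl⟩
  have hcw' : (starRingEnd ℂ) (w':ℂ) = (w':ℂ) := Complex.conj_ofReal w'
  have hcw : (starRingEnd ℂ) (w:ℂ) = (w:ℂ) := Complex.conj_ofReal w
  have hca : (starRingEnd ℂ) a = ((w:ℂ)*(starRingEnd ℂ) x + (starRingEnd ℂ) z * (starRingEnd ℂ) y) / w' := by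
    rw [ha]
    simp only [map_div₀, map_add, _root_.map_mul, hcw, hcw']
  have hcb : (starRingEnd ℂ) b = (starRingEnd ℂ) y / ((w:ℂ) * w') := by
    rw [hb]
    simp only [map_div₀, _root_.map_mul, hcw, hcw']
  have hnorm : (starRingEnd ℂ) a * a + (starRingEnd ℂ) b * b = 1 := by
    rw [hca, hcb, ha, hb]
    field_simp
    linear_combination -hw2C
  have hz'eq : z' = (starRingEnd ℂ) a * (z * (starRingEnd ℂ) x - (w:ℂ) * (starRingEnd ℂ) y)
      + (starRingEnd ℂ) b * ((w:ℂ)⁻¹ * (starRingEnd ℂ) x) := by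
    rw [hz', hca, hcb, hzpow]
    field_simp
  have hMdet : a * ((w:ℂ)⁻¹ * (starRingEnd ℂ) x)
      - b * (z * (starRingEnd ℂ) x - (w:ℂ) * (starRingEnd ℂ) y) = (w':ℂ)⁻¹ := by
    rw [ha, hb]
    field_simp
    linear_combination (w:ℂ) * hxyC
  -- entry identities
  have h00 : a * (w':ℂ) = (w:ℂ) * x + z * y := by rw [ha]; field_simp
  have h10 : b * (w':ℂ) = (w:ℂ)⁻¹ * y := by rw [hb]; field_simp
  have h01 : a * z' + (-(starRingEnd ℂ) b) * (w':ℂ)⁻¹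
      = z * (starRingEnd ℂ) x - (w:ℂ) * (starRingEnd ℂ) y := by
    linear_combination a * hz'eq + (starRingEnd ℂ) b * hMdet
      + (z * (starRingEnd ℂ) x - (w:ℂ) * (starRingEnd ℂ) y) * hnorm
  have h11 : b * z' + (starRingEnd ℂ) a * (w':ℂ)⁻¹ = (w:ℂ)⁻¹ * (starRingEnd ℂ) x := by
    linear_combination b * hz'eq - (starRingEnd ℂ) a * hMdet
      + ((w:ℂ)⁻¹ * (starRingEnd ℂ) x) * hnorm
  refine ⟨!![a, -(starRingEnd ℂ) b; b, (starRingEnd ℂ) a], w', z', hw'pos, ?_, ?_, ?_, hw'def, ?_, ?_⟩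
  · ext i j
    fin_cases i <;> fin_cases j <;>
      simp [Matrix.mul_apply, Fin.sum_univ_two, Matrix.conjTranspose_apply, Matrix.one_apply]
    · linear_combination hnorm
    · ring
    · ring
    · linear_combination hnorm
  · rw [Matrix.det_fin_two_of]
    linear_combination hnorm
  · ext i j
    fin_cases i <;> fin_cases j <;>
      simp [Matrix.mul_apply, Fin.sum_univ_two]
    · linear_combination -h00
    · linear_combination -h01
    · linear_combination -h10
    · linear_combination -h11
  · rw [hz']
    field_simp
  · intro U'' w'' z'' hpos'' hunit hdet heq
    rw [Matrix.det_fin_two] at hdet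
    have hu00 := congrFun (congrFun hunit 0) 0
    have hu01 := congrFun (congrFun hunit 0) 1
    simp only [Matrix.mul_apply, Fin.sum_univ_two, Matrix.conjTranspose_apply,
      Matrix.one_apply] at hu00 hu01
    norm_num at hu00 hu01
    have e00 := congrFun (congrFun heq 0) 0
    have e01 := congrFun (congrFun heq 0) 1
    have e10 := congrFun (congrFun heq 1) 0
    have e11 := congrFun (congrFun heq 1) 1
    simp only [Matrix.mul_apply, Fin.sum_univ_two] at e00 e01 e10 e11
    norm_num at e00 e01 e10 e11
    have hcw'' : (starRingEnd ℂ) (w'':ℂ) = (w'':ℂ) := Complex.conj_ofReal w''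
    have c00 := congrArg (starRingEnd ℂ) e00
    have c10 := congrArg (starRingEnd ℂ) e10
    simp only [map_add, _root_.map_mul, map_inv₀, hcw, hcw''] at c00 c10
    have m1 : ((w:ℂ) * x + z * y) * ((w:ℂ) * (starRingEnd ℂ) x + (starRingEnd ℂ) z * (starRingEnd ℂ) y)
        = (starRingEnd ℂ) (U'' 0 0) * U'' 0 0 * (w'':ℂ)^2 := by rw [e00, c00]; ring
    have m2 : ((w:ℂ)⁻¹ * y) * ((w:ℂ)⁻¹ * (starRingEnd ℂ) y)
        = (starRingEnd ℂ) (U'' 1 0) * U'' 1 0 * (w'':ℂ)^2 := by rw [e10, c10]; ring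
    have hsqC : ((w'':ℂ))^2 = ((w':ℂ))^2 := by
      linear_combination -m1 - m2 - hw2C' - (w'':ℂ)^2 * hu00
    have hsqR : w''^2 = w'^2 := by exact_mod_cast hsqC
    have hwweq : w'' = w' := by
      rw [← Real.sqrt_sq hpos''.le, ← Real.sqrt_sq hw'pos.le, hsqR]
    subst hwweq
    have hp : U'' 0 0 = a := by
      rw [ha]; field_simp; linear_combination -e00
    have e10' : y = U'' 1 0 * ↑w'' * ↑w ∨ y = U'' 1 0 * (↑w * ↑w'') := by
      right
      field_simp at e10
      linear_combination e10
    have hr : U'' 1 0 = b := by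
      rw [hb]
      rcases e10' with h | h <;> rw [h] <;> field_simp <;> ring
    have hs : U'' 1 1 = (starRingEnd ℂ) (U'' 0 0) := by
      linear_combination (-(U'' 1 1)) * hu00 + (starRingEnd ℂ) (U'' 0 0) * hdet + U'' 1 0 * hu01
    have hq : U'' 0 1 = -(starRingEnd ℂ) (U'' 1 0) := by
      rcases eq_or_ne (U'' 1 0) 0 with hrz | hrz
      · have hpne : (starRingEnd ℂ) (U'' 0 0) ≠ 0 := by
          intro hc
          rw [hrz, hc] at hu00
          simp at hu00
        have hz0 : (starRingEnd ℂ) (U'' 0 0) * U'' 0 1 = 0 := by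
          rw [hrz] at hu01
          simpa using hu01
        rcases mul_eq_zero.1 hz0 with hc | hc
        · exact absurd hc hpne
        · rw [hc, hrz]; simp
      · have hqr : (U'' 0 1 + (starRingEnd ℂ) (U'' 1 0)) * U'' 1 0 = 0 := by
          linear_combination hu00 - hdet + U'' 0 0 * hs
        rcases mul_eq_zero.1 hqr with hc | hc
        · exact eq_neg_of_add_eq_zero_left hc
        · exact absurd hc hrz
    have hq' : U'' 0 1 = -(starRingEnd ℂ) b := by rw [hq, hr]
    have hs' : U'' 1 1 = (starRingEnd ℂ) a := by rw [hs, hp]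
    have d1 : a * z'' = a * z' := by
      linear_combination -e01 - h01 - z'' * hp - ((w'':ℂ))⁻¹ * hq'
    have d2 : b * z'' = b * z' := by
      linear_combination -e11 - h11 - z'' * hr - ((w'':ℂ))⁻¹ * hs'
    refine ⟨?_, rfl, ?_⟩
    · ext i j
      fin_cases i <;> fin_cases j <;> simp [hp, hq', hr, hs']
    · linear_combination (starRingEnd ℂ) a * d1 + (starRingEnd ℂ) b * d2 - (z'' - z') * hnorm
end

section
/- Let λ > 0 and m ∈ ℝ. Suppose Π₀ ∈ ℝ and Π ∈ ℝ³ satisfy Π₀² + (λ²/4)|Π|² = 1, and suppose φ ∈ ℂ² is nonzero with (Π₀·I + i(λ/2)·(Π·σ))·φ = e^{−imλ/2}·φ. Then: (i) Π₀ = cos(mλ/2); (ii) (Π·σ)·φ = −(2/λ)·sin(mλ/2)·φ; and (iii) |Π|² = (4/λ²)·sin²(mλ/2). (This shows that for spin 1/2 the group-valued constraint of the quantum double model implies both the deformed Dirac equation in momentum space and the deformed mass-shell relation.) -/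
open Matrix Complex

/-- The Pauli matrices `σ₁, σ₂, σ₃`. -/
noncomputable def pauli (a : Fin 3) : Matrix (Fin 2) (Fin 2) ℂ :=
  ![!![0, 1; 1, 0], !![0, -Complex.I; Complex.I, 0], !![1, 0; 0, -1]] a

/-- `p·σ = p₁σ₁ + p₂σ₂ + p₃σ₃` for a real vector `p`. -/
noncomputable def pauliVec (p : Fin 3 → ℝ) : Matrix (Fin 2) (Fin 2) ℂ :=
  ∑ a : Fin 3, (p a : ℂ) • pauli a

lemma pauliVec_sq (p : Fin 3 → ℝ) :
    pauliVec p * pauliVec p = ((p 0 ^ 2 + p 1 ^ 2 + p 2 ^ 2 : ℝ) : ℂ) • (1 : Matrix (Fin 2) (Fin 2) ℂ) := by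
  ext i j
  fin_cases i <;> fin_cases j <;>
    simp [pauliVec, pauli, Matrix.mul_apply, Fin.sum_univ_succ, Matrix.one_apply] <;>
    ring_nf <;> simp [Complex.I_sq] <;> ring


/-- **Spin-1/2 constraint in the quantum double model**: if `u = Π₀·I + i(λ/2)(Π·σ) ∈ SU(2)`
(so `Π₀² + (λ²/4)|Π|² = 1`) and `u φ = e^{−imλ/2} φ` for a nonzero `φ ∈ ℂ²`, then
`Π₀ = cos(mλ/2)`, `(Π·σ)φ = −(2/λ)sin(mλ/2)·φ`, and `|Π|² = (4/λ²)sin²(mλ/2)`. -/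
theorem quantum_double_spin_half_constraint
    (l : ℝ) (hl : 0 < l) (m : ℝ) (P₀ : ℝ) (P : Fin 3 → ℝ)
    (hsphere : P₀ ^ 2 + l ^ 2 / 4 * (P 0 ^ 2 + P 1 ^ 2 + P 2 ^ 2) = 1)
    (φ : Fin 2 → ℂ) (hφ : φ ≠ 0)
    (hconstraint :
      ((P₀ : ℂ) • (1 : Matrix (Fin 2) (Fin 2) ℂ) + (Complex.I * (l / 2)) • pauliVec P).mulVec φ
        = Complex.exp (-Complex.I * m * l / 2) • φ) :
    P₀ = Real.cos (m * l / 2) ∧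
    (pauliVec P).mulVec φ = ((-(2 / l) * Real.sin (m * l / 2) : ℝ) : ℂ) • φ ∧
    P 0 ^ 2 + P 1 ^ 2 + P 2 ^ 2 = 4 / l ^ 2 * Real.sin (m * l / 2) ^ 2 := by
  set s := Real.sin (m * l / 2) with hs
  set co := Real.cos (m * l / 2) with hco
  set c : ℂ := ((-(2 / l) * s : ℝ) : ℂ) + ((-(2 / l) * (co - P₀) : ℝ) : ℂ) * Complex.I with hcdef
  clear_value s co c
  have hl' : (l : ℂ) ≠ 0 := by exact_mod_cast hl.ne'
  have hz : (Complex.I * (l / 2)) ≠ 0 := by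
    simp [Complex.I_ne_zero, hl']
  -- exponential in real-imaginary form
  have hk : Complex.exp (-Complex.I * m * l / 2) = ((co : ℂ) - (s : ℂ) * Complex.I) := by
    have h1 : (-Complex.I * m * l / 2) = ((-(m * l / 2) : ℝ) : ℂ) * Complex.I := by
      push_cast; ring
    rw [h1, Complex.exp_mul_I, ← Complex.ofReal_cos, ← Complex.ofReal_sin,
      Real.cos_neg, Real.sin_neg]
    push_cast [hs, hco]; ring
  -- the scalar identity
  have hscal : (Complex.I * (l / 2)) * c = Complex.exp (-Complex.I * m * l / 2) - (P₀ : ℂ) := by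
    rw [hk, hcdef]
    field_simp
    ring_nf
    simp [Complex.I_sq]
    have hinv : (l : ℂ) * (l : ℂ)⁻¹ = 1 := mul_inv_cancel₀ hl'
    linear_combination (-(Complex.I * s * 2) + co * 2 - P₀ * 2) * hinv
  -- eigenvector equation for pauliVec P
  have hAφ : (pauliVec P).mulVec φ = c • φ := by
    have h2 : (P₀ : ℂ) • φ + (Complex.I * (l / 2)) • (pauliVec P).mulVec φ
        = Complex.exp (-Complex.I * m * l / 2) • φ := by
      rw [← hconstraint]
      simp [Matrix.add_mulVec, Matrix.smul_mulVec, Matrix.one_mulVec]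
    have h3 : (Complex.I * (l / 2)) • (pauliVec P).mulVec φ
        = (Complex.I * (l / 2)) • (c • φ) := by
      rw [smul_smul, hscal]
      funext i
      have := congrFun h2 i
      simp only [Pi.add_apply, Pi.smul_apply, smul_eq_mul] at this ⊢
      linear_combination this
    exact smul_right_injective (Fin 2 → ℂ) hz h3
  -- squared eigenvalue equation
  have hsq : ((P 0 ^ 2 + P 1 ^ 2 + P 2 ^ 2 : ℝ) : ℂ) = c * c := by
    have h4 : ((P 0 ^ 2 + P 1 ^ 2 + P 2 ^ 2 : ℝ) : ℂ) • φ = (c * c) • φ := by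
      calc ((P 0 ^ 2 + P 1 ^ 2 + P 2 ^ 2 : ℝ) : ℂ) • φ
          = (pauliVec P * pauliVec P).mulVec φ := by
            rw [pauliVec_sq]; simp [Matrix.smul_mulVec, Matrix.one_mulVec]
        _ = (pauliVec P).mulVec ((pauliVec P).mulVec φ) := by rw [← Matrix.mulVec_mulVec]
        _ = (c * c) • φ := by rw [hAφ, Matrix.mulVec_smul, hAφ, smul_smul]
    obtain ⟨i, hi⟩ := Function.ne_iff.mp hφ
    have := congrFun h4 i
    simp only [Pi.smul_apply, smul_eq_mul] at this
    exact mul_right_cancel₀ hi this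
  -- extract real equations
  have h5 : (P 0 ^ 2 + P 1 ^ 2 + P 2 ^ 2)
      = (-(2 / l) * s) * (-(2 / l) * s)
        - (-(2 / l) * (co - P₀)) * (-(2 / l) * (co - P₀)) := by
    have := congrArg Complex.re hsq
    simpa [hcdef, Complex.mul_re, ← Complex.ofReal_pow] using this
  have h6 : (0 : ℝ) = (-(2 / l) * s) * (-(2 / l) * (co - P₀))
      + (-(2 / l) * (co - P₀)) * (-(2 / l) * s) := by
    have := congrArg Complex.im hsq
    simpa [hcdef, Complex.mul_im, ← Complex.ofReal_pow] using this
  have hnn : (0:ℝ) ≤ P 0 ^ 2 + P 1 ^ 2 + P 2 ^ 2 := by positivity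
  have hlne : l ≠ 0 := hl.ne'
  have hd : s * (co - P₀) = 0 := by
    field_simp at h6
    nlinarith [h6]
  have h5' : (P 0 ^ 2 + P 1 ^ 2 + P 2 ^ 2) * l ^ 2 = 4 * s ^ 2 - 4 * (co - P₀) ^ 2 := by
    field_simp at h5
    nlinarith [h5]
  have hle : (co - P₀) ^ 2 ≤ s ^ 2 := by nlinarith [mul_pos hl hl]
  have h7 : co - P₀ = 0 := by
    have h8 : ((co - P₀) ^ 2) ^ 2 ≤ 0 := by
      calc ((co - P₀) ^ 2) ^ 2 = (co - P₀) ^ 2 * (co - P₀) ^ 2 := by ring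
        _ ≤ s ^ 2 * (co - P₀) ^ 2 := mul_le_mul_of_nonneg_right hle (sq_nonneg _)
        _ = (s * (co - P₀)) ^ 2 := by ring
        _ = 0 := by rw [hd]; norm_num
    have h9 : ((co - P₀) ^ 2) ^ 2 = 0 := le_antisymm h8 (by positivity)
    have h10 := (pow_eq_zero_iff (by norm_num : (2:ℕ) ≠ 0)).mp h9
    exact (pow_eq_zero_iff (by norm_num : (2:ℕ) ≠ 0)).mp h10
  have hP₀ : P₀ = co := by linarith
  refine ⟨hP₀, ?_, ?_⟩
  · rw [hAφ, hcdef, hP₀]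
    simp
  · have h10 : (P 0 ^ 2 + P 1 ^ 2 + P 2 ^ 2) * l ^ 2 = 4 * s ^ 2 := by
      rw [h5']; rw [h7]; ring
    rw [div_mul_eq_mul_div, eq_div_iff (pow_ne_zero 2 hlne)]
    linarith [h10]
end

section
/- Let λ > 0 and m ∈ ℝ with e^{−imλ} ≠ 1 and cos(mλ/2) ≠ 0. Set Π₀ = cos(mλ/2), and let Π ∈ ℝ³ satisfy Π₀² + (λ²/4)|Π|² = 1. Suppose φ ∈ ℂ³ satisfies (1 − (λ²/2)|Π|²)·φ − λ·Π₀·(Π × φ) + (λ²/2)·(Π·φ)·Π = e^{−imλ}·φ. Then Π·φ = 0 and Π × φ = (2i/λ)·sin(mλ/2)·φ. (For spin 1, the group-valued constraint of the quantum double model implies transversality and the deformed spin-1 wave equation in momentum space.) -/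
open Complex

/-- The Levi-Civita symbol on three indices, `ε₁₂₃ = 1` (indices `0,1,2` here). -/
def eps (a b c : Fin 3) : ℤ :=
  (((b : ℕ) : ℤ) - ((a : ℕ) : ℤ)) * (((c : ℕ) : ℤ) - ((a : ℕ) : ℤ))
    * (((c : ℕ) : ℤ) - ((b : ℕ) : ℤ)) / 2

/-- The cross product `Π × φ` of a real vector with a complex vector, componentwise. -/
noncomputable def crossRC (P : Fin 3 → ℝ) (φ : Fin 3 → ℂ) : Fin 3 → ℂ :=
  fun a => ∑ b : Fin 3, ∑ c : Fin 3, (eps a b c : ℂ) * (P b : ℂ) * φ c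

/-- **Spin-1 constraint in the quantum double model**: with `λ > 0`, `e^{−imλ} ≠ 1`,
`cos(mλ/2) ≠ 0`, `Π₀ = cos(mλ/2)` and `Π₀² + (λ²/4)|Π|² = 1`, any `φ ∈ ℂ³` satisfying
`(1 − (λ²/2)|Π|²)φ − λΠ₀(Π × φ) + (λ²/2)(Π·φ)Π = e^{−imλ}φ` is transversal, `Π·φ = 0`,
and satisfies the deformed spin-1 wave equation `Π × φ = (2i/λ)sin(mλ/2)·φ`. -/
theorem quantum_double_spin_one_constraint
    (l : ℝ) (hl : 0 < l) (m : ℝ)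
    (hexp : Complex.exp (-Complex.I * m * l) ≠ 1)
    (hcos : Real.cos (m * l / 2) ≠ 0)
    (P₀ : ℝ) (hP₀ : P₀ = Real.cos (m * l / 2))
    (P : Fin 3 → ℝ)
    (hsphere : P₀ ^ 2 + l ^ 2 / 4 * (P 0 ^ 2 + P 1 ^ 2 + P 2 ^ 2) = 1)
    (φ : Fin 3 → ℂ)
    (hconstraint : ∀ a : Fin 3,
      ((1 - l ^ 2 / 2 * (P 0 ^ 2 + P 1 ^ 2 + P 2 ^ 2) : ℝ) : ℂ) * φ a
          - ((l * P₀ : ℝ) : ℂ) * crossRC P φ a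
          + ((l ^ 2 / 2 : ℝ) : ℂ) * (∑ b : Fin 3, (P b : ℂ) * φ b) * (P a : ℂ)
        = Complex.exp (-Complex.I * m * l) * φ a) :
    (∑ b : Fin 3, (P b : ℂ) * φ b) = 0 ∧
    ∀ a : Fin 3,
      crossRC P φ a = (2 * Complex.I / (l : ℂ)) * (Real.sin (m * l / 2) : ℂ) * φ a := by
  subst hP₀
  set c := Real.cos (m * l / 2) with hcdef
  set sn := Real.sin (m * l / 2) with hsndef
  have hl' : (l : ℂ) ≠ 0 := by exact_mod_cast hl.ne'
  have hc : (c : ℂ) ≠ 0 := by exact_mod_cast hcos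
  set E := Complex.exp (-Complex.I * m * l) with hEdef
  have hE : E = ((c : ℂ) ^ 2 * 2 - 1) - Complex.I * (2 * (sn : ℂ) * (c : ℂ)) := by
    have harg : (-Complex.I * m * l) = ((-(m * l) : ℝ) : ℂ) * Complex.I := by
      push_cast; ring
    have hcos2 := Real.cos_two_mul (m * l / 2)
    have hsin2 := Real.sin_two_mul (m * l / 2)
    rw [show 2 * (m * l / 2) = m * l by ring] at hcos2 hsin2
    rw [hEdef, harg, Complex.exp_mul_I, ← Complex.ofReal_cos, ← Complex.ofReal_sin,
      Real.cos_neg, Real.sin_neg, hcos2, hsin2, ← hcdef, ← hsndef]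
    push_cast; ring
  have hsC : ((c : ℂ)) ^ 2
      + (l : ℂ) ^ 2 / 4 * ((P 0 : ℂ) ^ 2 + (P 1 : ℂ) ^ 2 + (P 2 : ℂ) ^ 2) = 1 := by
    exact_mod_cast congrArg (Complex.ofReal) hsphere
  have h0 := hconstraint 0
  have h1 := hconstraint 1
  have h2 := hconstraint 2
  simp only [crossRC, Fin.sum_univ_three] at h0 h1 h2
  norm_num [eps] at h0 h1 h2
  have hs : (∑ b : Fin 3, (P b : ℂ) * φ b) = 0 := by
    have key : (E - 1) * (∑ b : Fin 3, (P b : ℂ) * φ b) = 0 := by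
      rw [Fin.sum_univ_three]
      linear_combination (-(P 0 : ℂ)) * h0 + (-(P 1 : ℂ)) * h1 + (-(P 2 : ℂ)) * h2
    rcases mul_eq_zero.mp key with h | h
    · exact absurd (sub_eq_zero.mp h) hexp
    · exact h
  refine ⟨hs, ?_⟩
  rw [Fin.sum_univ_three] at hs
  intro a
  fin_cases a
  · have key : (c : ℂ) * ((l : ℂ) * ((P 1 : ℂ) * φ 2 - (P 2 : ℂ) * φ 1))
        = (c : ℂ) * (2 * Complex.I * (sn : ℂ) * φ 0) := by
      linear_combination (-(1 : ℂ)) * h0 - 2 * φ 0 * hsC - φ 0 * hE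
        + ((l : ℂ) ^ 2 / 2 * (P 0 : ℂ)) * hs
    have key2 := mul_left_cancel₀ hc key
    simp only [crossRC, Fin.sum_univ_three]
    norm_num [eps]
    field_simp
    linear_combination key2
  · have key : (c : ℂ) * ((l : ℂ) * ((P 2 : ℂ) * φ 0 - (P 0 : ℂ) * φ 2))
        = (c : ℂ) * (2 * Complex.I * (sn : ℂ) * φ 1) := by
      linear_combination (-(1 : ℂ)) * h1 - 2 * φ 1 * hsC - φ 1 * hE
        + ((l : ℂ) ^ 2 / 2 * (P 1 : ℂ)) * hs
    have key2 := mul_left_cancel₀ hc key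
    simp only [crossRC, Fin.sum_univ_three]
    norm_num [eps]
    field_simp
    linear_combination key2
  · have key : (c : ℂ) * ((l : ℂ) * ((P 0 : ℂ) * φ 1 - (P 1 : ℂ) * φ 0))
        = (c : ℂ) * (2 * Complex.I * (sn : ℂ) * φ 2) := by
      linear_combination (-(1 : ℂ)) * h2 - 2 * φ 2 * hsC - φ 2 * hE
        + ((l : ℂ) ^ 2 / 2 * (P 2 : ℂ)) * hs
    have key2 := mul_left_cancel₀ hc key
    show crossRC P φ 2 = 2 * Complex.I / (l : ℂ) * (sn : ℂ) * φ 2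
    simp only [crossRC, Fin.sum_univ_three]
    norm_num [eps]
    field_simp
    linear_combination key2
end

section
/- Let V be a complex vector space and let D₁, D₂, D₃ be linear endomorphisms of V satisfying [D_a, D_b] = Σ_c ε_{abc} D_c for all a, b. Let k be a real number with k > 0 and let φ = (φ₁, φ₂, φ₃) ∈ V³ satisfy Σ_{a,c} ε_{abc} D_a(φ_c) = k·φ_b for all b ∈ {1,2,3}. Then Σ_{c=1}^{3} D_c(φ_c) = 0. (For spin 1, the first order constraint automatically implies the divergence-free condition ξ^L_c φ_c = 0.) -/
/-- **Spin-1 first-order constraint implies divergence-free**: if `D₁, D₂, D₃` satisfy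
`[D_a, D_b] = ε_{abc} D_c` and `φ = (φ₁, φ₂, φ₃)` satisfies
`Σ_{a,c} ε_{abc} D_a φ_c = k φ_b` with `k > 0`, then `Σ_c D_c φ_c = 0`. -/
theorem spin_one_constraint_divergence_free
    (V : Type*) [AddCommGroup V] [Module ℂ V]
    (D : Fin 3 → Module.End ℂ V)
    (hD : ∀ a b : Fin 3, ⁅D a, D b⁆ = ∑ c : Fin 3, ((eps a b c : ℂ) • D c))
    (k : ℝ) (hk : 0 < k) (φ : Fin 3 → V)
    (hφ : ∀ b : Fin 3,
      ∑ a : Fin 3, ∑ c : Fin 3, (eps a b c : ℂ) • (D a) (φ c) = (k : ℂ) • φ b) :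
    ∑ c : Fin 3, (D c) (φ c) = 0 := by
  have h0 := hφ 0
  have h1 := hφ 1
  have h2 := hφ 2
  have c01 := hD 0 1
  have c12 := hD 1 2
  have c20 := hD 2 0
  simp only [Fin.sum_univ_three] at h0 h1 h2 c01 c12 c20 ⊢
  norm_num [eps] at h0 h1 h2 c01 c12 c20
  -- pointwise commutator relations
  have p01 : ∀ v : V, (D 0) ((D 1) v) = (D 1) ((D 0) v) + (D 2) v := by
    intro v
    have := DFunLike.congr_fun c01 v
    simp only [Ring.lie_def, LinearMap.sub_apply, Module.End.mul_apply] at this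
    linear_combination (norm := abel) this
  have p12 : ∀ v : V, (D 1) ((D 2) v) = (D 2) ((D 1) v) + (D 0) v := by
    intro v
    have := DFunLike.congr_fun c12 v
    simp only [Ring.lie_def, LinearMap.sub_apply, Module.End.mul_apply] at this
    linear_combination (norm := abel) this
  have p20 : ∀ v : V, (D 2) ((D 0) v) = (D 0) ((D 2) v) + (D 1) v := by
    intro v
    have := DFunLike.congr_fun c20 v
    simp only [Ring.lie_def, LinearMap.sub_apply, Module.End.mul_apply] at this
    linear_combination (norm := abel) this
  set S := (D 0) (φ 0) + (D 1) (φ 1) + (D 2) (φ 2) with hS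
  have key : (k : ℂ) • S = -S := by
    rw [hS, smul_add, smul_add, ← map_smul, ← map_smul, ← map_smul]
    simp only [Complex.coe_smul]
    rw [← h0, ← h1, ← h2]
    simp only [map_add, map_neg]
    rw [p01 (φ 2), p12 (φ 0), p20 (φ 1)]
    abel
  have hsum : ((k : ℂ) + 1) • S = 0 := by
    rw [add_smul, one_smul, key]
    abel
  have hne : ((k : ℂ) + 1) ≠ 0 := by
    have : ((k + 1 : ℝ) : ℂ) ≠ 0 := by
      rw [Complex.ofReal_ne_zero]
      linarith
    simpa using this
  rcases smul_eq_zero.mp hsum with h | h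
  · exact absurd h hne
  · exact h
end

section
/- Let V be a complex vector space and let D₁, D₂, D₃ be linear endomorphisms of V satisfying [D_a, D_b] = Σ_c ε_{abc} D_c for all a, b. Let k be a real number with k > 0 and let φ = (φ₁, φ₂, φ₃) ∈ V³ satisfy Σ_{a,c} ε_{abc} D_a(φ_c) = k·φ_b for all b ∈ {1,2,3}. Then Σ_{a=1}^{3} D_a²(φ_b) = −k(k+1)·φ_b for all b ∈ {1,2,3}. (This is the spin-1 case: the first-order constraint forces the quadratic Casimir eigenvalue k(k+1), i.e. the wave equation ((ξ^R)² + k(k+1))φ = 0.) -/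
/-- **Spin-1 first-order constraint forces the Casimir eigenvalue**: if `D₁, D₂, D₃` satisfy
`[D_a, D_b] = ε_{abc} D_c` and `φ = (φ₁, φ₂, φ₃)` satisfies
`Σ_{a,c} ε_{abc} D_a φ_c = k φ_b` with `k > 0`, then `Σ_a D_a² φ_b = −k(k+1) φ_b` for all
`b`. -/
theorem spin_one_constraint_casimir
    (V : Type*) [AddCommGroup V] [Module ℂ V]
    (D : Fin 3 → Module.End ℂ V)
    (hD : ∀ a b : Fin 3, ⁅D a, D b⁆ = ∑ c : Fin 3, ((eps a b c : ℂ) • D c))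
    (k : ℝ) (hk : 0 < k) (φ : Fin 3 → V)
    (hφ : ∀ b : Fin 3,
      ∑ a : Fin 3, ∑ c : Fin 3, (eps a b c : ℂ) • (D a) (φ c) = (k : ℂ) • φ b) :
    ∀ b : Fin 3,
      ∑ a : Fin 3, (D a) ((D a) (φ b)) = ((-(k * (k + 1)) : ℝ) : ℂ) • φ b := by
  have comm : ∀ a b : Fin 3, ∀ x : V,
      D a (D b x) - D b (D a x) = ∑ c : Fin 3, (eps a b c : ℂ) • D c x := by
    intro a b x
    have h := LinearMap.ext_iff.mp (hD a b) x
    simpa [Ring.lie_def, LinearMap.sub_apply, Module.End.mul_apply,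
      LinearMap.sum_apply, LinearMap.smul_apply] using h
  have c01 : ∀ x : V, D 0 (D 1 x) - D 1 (D 0 x) = D 2 x := by
    intro x
    have h := comm 0 1 x
    simp only [Fin.sum_univ_three] at h
    norm_num [eps] at h
    exact h
  have c12 : ∀ x : V, D 1 (D 2 x) - D 2 (D 1 x) = D 0 x := by
    intro x
    have h := comm 1 2 x
    simp only [Fin.sum_univ_three] at h
    norm_num [eps] at h
    exact h
  have c20 : ∀ x : V, D 2 (D 0 x) - D 0 (D 2 x) = D 1 x := by
    intro x
    have h := comm 2 0 x
    simp only [Fin.sum_univ_three] at h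
    norm_num [eps] at h
    linear_combination (norm := module) h
  -- the three components of the first-order constraint
  have H0 : D 2 (φ 1) - D 1 (φ 2) = (k : ℂ) • φ 0 := by
    have h := hφ 0
    simp only [Fin.sum_univ_three,
      show ((eps 0 0 0 : ℤ) : ℂ) = 0 from by norm_num [eps],
      show ((eps 0 0 1 : ℤ) : ℂ) = 0 from by norm_num [eps],
      show ((eps 0 0 2 : ℤ) : ℂ) = 0 from by norm_num [eps],
      show ((eps 1 0 0 : ℤ) : ℂ) = 0 from by norm_num [eps],
      show ((eps 1 0 1 : ℤ) : ℂ) = 0 from by norm_num [eps],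
      show ((eps 1 0 2 : ℤ) : ℂ) = -1 from by norm_num [eps],
      show ((eps 2 0 0 : ℤ) : ℂ) = 0 from by norm_num [eps],
      show ((eps 2 0 1 : ℤ) : ℂ) = 1 from by norm_num [eps],
      show ((eps 2 0 2 : ℤ) : ℂ) = 0 from by norm_num [eps],
      zero_smul, one_smul, neg_smul, add_zero, zero_add] at h
    linear_combination (norm := module) h
  have H1 : D 0 (φ 2) - D 2 (φ 0) = (k : ℂ) • φ 1 := by
    have h := hφ 1
    simp only [Fin.sum_univ_three,
      show ((eps 0 1 0 : ℤ) : ℂ) = 0 from by norm_num [eps],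
      show ((eps 0 1 1 : ℤ) : ℂ) = 0 from by norm_num [eps],
      show ((eps 0 1 2 : ℤ) : ℂ) = 1 from by norm_num [eps],
      show ((eps 1 1 0 : ℤ) : ℂ) = 0 from by norm_num [eps],
      show ((eps 1 1 1 : ℤ) : ℂ) = 0 from by norm_num [eps],
      show ((eps 1 1 2 : ℤ) : ℂ) = 0 from by norm_num [eps],
      show ((eps 2 1 0 : ℤ) : ℂ) = -1 from by norm_num [eps],
      show ((eps 2 1 1 : ℤ) : ℂ) = 0 from by norm_num [eps],
      show ((eps 2 1 2 : ℤ) : ℂ) = 0 from by norm_num [eps],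
      zero_smul, one_smul, neg_smul, add_zero, zero_add] at h
    linear_combination (norm := module) h
  have H2 : D 1 (φ 0) - D 0 (φ 1) = (k : ℂ) • φ 2 := by
    have h := hφ 2
    simp only [Fin.sum_univ_three,
      show ((eps 0 2 0 : ℤ) : ℂ) = 0 from by norm_num [eps],
      show ((eps 0 2 1 : ℤ) : ℂ) = -1 from by norm_num [eps],
      show ((eps 0 2 2 : ℤ) : ℂ) = 0 from by norm_num [eps],
      show ((eps 1 2 0 : ℤ) : ℂ) = 1 from by norm_num [eps],
      show ((eps 1 2 1 : ℤ) : ℂ) = 0 from by norm_num [eps],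
      show ((eps 1 2 2 : ℤ) : ℂ) = 0 from by norm_num [eps],
      show ((eps 2 2 0 : ℤ) : ℂ) = 0 from by norm_num [eps],
      show ((eps 2 2 1 : ℤ) : ℂ) = 0 from by norm_num [eps],
      show ((eps 2 2 2 : ℤ) : ℂ) = 0 from by norm_num [eps],
      zero_smul, one_smul, neg_smul, add_zero, zero_add] at h
    linear_combination (norm := module) h
  -- divergence vanishes
  have B0 : D 0 (D 2 (φ 1)) - D 0 (D 1 (φ 2)) = (k : ℂ) • D 0 (φ 0) := by
    have := congrArg (D 0) H0
    simpa [map_sub, map_smul] using this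
  have B1 : D 1 (D 0 (φ 2)) - D 1 (D 2 (φ 0)) = (k : ℂ) • D 1 (φ 1) := by
    have := congrArg (D 1) H1
    simpa [map_sub, map_smul] using this
  have B2 : D 2 (D 1 (φ 0)) - D 2 (D 0 (φ 1)) = (k : ℂ) • D 2 (φ 2) := by
    have := congrArg (D 2) H2
    simpa [map_sub, map_smul] using this
  have hkey : ((k : ℂ) + 1) • (D 0 (φ 0) + D 1 (φ 1) + D 2 (φ 2)) = 0 := by
    linear_combination (norm := module)
      (-1 : ℂ) • B0 - B1 - B2 - c01 (φ 2) - c20 (φ 1) - c12 (φ 0)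
  have hk1 : ((k : ℂ) + 1) ≠ 0 := by
    have h1 : ((k + 1 : ℝ) : ℂ) ≠ 0 := Complex.ofReal_ne_zero.mpr (by linarith)
    push_cast at h1
    exact h1
  have hδ : D 0 (φ 0) + D 1 (φ 1) + D 2 (φ 2) = 0 := by
    have := congrArg (fun x : V => ((k : ℂ) + 1)⁻¹ • x) hkey
    simpa [smul_smul, inv_mul_cancel₀ hk1] using this
  have hδ0 : D 0 (D 0 (φ 0)) + D 0 (D 1 (φ 1)) + D 0 (D 2 (φ 2)) = 0 := by
    have := congrArg (D 0) hδ
    simpa [map_add] using this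
  have hδ1 : D 1 (D 0 (φ 0)) + D 1 (D 1 (φ 1)) + D 1 (D 2 (φ 2)) = 0 := by
    have := congrArg (D 1) hδ
    simpa [map_add] using this
  have hδ2 : D 2 (D 0 (φ 0)) + D 2 (D 1 (φ 1)) + D 2 (D 2 (φ 2)) = 0 := by
    have := congrArg (D 2) hδ
    simpa [map_add] using this
  -- applied constraints needed in the main computation
  have A10 : D 1 (D 1 (φ 0)) - D 1 (D 0 (φ 1)) = (k : ℂ) • D 1 (φ 2) := by
    have := congrArg (D 1) H2; simpa [map_sub, map_smul] using this
  have A20 : D 2 (D 0 (φ 2)) - D 2 (D 2 (φ 0)) = (k : ℂ) • D 2 (φ 1) := by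
    have := congrArg (D 2) H1; simpa [map_sub, map_smul] using this
  have A11 : D 2 (D 2 (φ 1)) - D 2 (D 1 (φ 2)) = (k : ℂ) • D 2 (φ 0) := by
    have := congrArg (D 2) H0; simpa [map_sub, map_smul] using this
  have A21 : D 0 (D 1 (φ 0)) - D 0 (D 0 (φ 1)) = (k : ℂ) • D 0 (φ 2) := by
    have := congrArg (D 0) H2; simpa [map_sub, map_smul] using this
  have A12 : D 0 (D 0 (φ 2)) - D 0 (D 2 (φ 0)) = (k : ℂ) • D 0 (φ 1) := by
    have := congrArg (D 0) H1; simpa [map_sub, map_smul] using this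
  have A22 : D 1 (D 2 (φ 1)) - D 1 (D 1 (φ 2)) = (k : ℂ) • D 1 (φ 0) := by
    have := congrArg (D 1) H0; simpa [map_sub, map_smul] using this
  have G0 : D 0 (D 0 (φ 0)) + D 1 (D 1 (φ 0)) + D 2 (D 2 (φ 0))
      = -((k : ℂ) * ((k : ℂ) + 1)) • φ 0 := by
    linear_combination (norm := module)
      A10 - c01 (φ 1) - A20 + c20 (φ 2) + hδ0 - ((k : ℂ) + 1) • H0
  have G1 : D 0 (D 0 (φ 1)) + D 1 (D 1 (φ 1)) + D 2 (D 2 (φ 1))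
      = -((k : ℂ) * ((k : ℂ) + 1)) • φ 1 := by
    linear_combination (norm := module)
      A11 - c12 (φ 2) - A21 + c01 (φ 0) + hδ1 - ((k : ℂ) + 1) • H1
  have G2 : D 0 (D 0 (φ 2)) + D 1 (D 1 (φ 2)) + D 2 (D 2 (φ 2))
      = -((k : ℂ) * ((k : ℂ) + 1)) • φ 2 := by
    linear_combination (norm := module)
      A12 - c20 (φ 0) - A22 + c12 (φ 1) + hδ2 - ((k : ℂ) + 1) • H2
  have hcast : ((-(k * (k + 1)) : ℝ) : ℂ) = -((k : ℂ) * ((k : ℂ) + 1)) := by push_cast; ring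
  intro b
  rw [Fin.sum_univ_three, hcast]
  fin_cases b
  · exact G0
  · exact G1
  · exact G2
end

section
/- Let ψ : SU(2) → ℂ satisfy the spin-1/2 equivariance property ψ(v · diag(e^{iα/2}, e^{−iα/2})) = e^{iα/2}·ψ(v) for all v ∈ SU(2) and all α ∈ ℝ. If v₁, v₂ ∈ SU(2) satisfy v₁ σ₃ v₁⁻¹ = v₂ σ₃ v₂⁻¹, then ψ(v₁)·(v₁ e₂) = ψ(v₂)·(v₂ e₂) in ℂ², where e₂ = (0,1)ᵀ. (Hence the vector-valued function φ̃(p) := ψ(v)·ρ^{1/2}(v)|1/2,−1/2⟩, with p determined by p·σ = m·v σ₃ v⁻¹, is well-defined on the sphere S²_m, i.e. it depends only on p and not on the choice of v.) -/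
open Matrix Complex

/-- The third Pauli matrix `σ₃`. -/
noncomputable def pauli3 : Matrix (Fin 2) (Fin 2) ℂ := !![1, 0; 0, -1]

/-- **Well-definedness of the spin-1/2 monopole section**: if `ψ : SU(2) → ℂ` satisfies the
equivariance `ψ(v·diag(e^{iα/2}, e^{−iα/2})) = e^{iα/2} ψ(v)`, and `v₁, v₂ ∈ SU(2)` satisfy
`v₁ σ₃ v₁⁻¹ = v₂ σ₃ v₂⁻¹`, then `ψ(v₁)·(v₁ e₂) = ψ(v₂)·(v₂ e₂)` in `ℂ²`, where
`e₂ = (0,1)ᵀ` is the lowest weight vector of the defining representation. -/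
theorem monopole_section_well_defined
    (ψ : Matrix (Fin 2) (Fin 2) ℂ → ℂ)
    (hequiv : ∀ v : Matrix (Fin 2) (Fin 2) ℂ, vᴴ * v = 1 → v.det = 1 → ∀ α : ℝ,
      ψ (v * !![Complex.exp (Complex.I * α / 2), 0; 0, Complex.exp (-Complex.I * α / 2)])
        = Complex.exp (Complex.I * α / 2) * ψ v)
    (v₁ v₂ : Matrix (Fin 2) (Fin 2) ℂ)
    (hv₁ : v₁ᴴ * v₁ = 1) (hdv₁ : v₁.det = 1)
    (hv₂ : v₂ᴴ * v₂ = 1) (hdv₂ : v₂.det = 1)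
    (horbit : v₁ * pauli3 * v₁⁻¹ = v₂ * pauli3 * v₂⁻¹) :
    ψ v₁ • v₁.mulVec ![0, 1] = ψ v₂ • v₂.mulVec ![0, 1] := by
  have hinv1 : v₁⁻¹ = v₁ᴴ := (Matrix.inv_eq_left_inv hv₁).symm ▸ rfl
  have hinv2 : v₂⁻¹ = v₂ᴴ := (Matrix.inv_eq_left_inv hv₂).symm ▸ rfl
  have hr1 : v₁ * v₁ᴴ = 1 := mul_eq_one_comm.mp hv₁
  have hr2 : v₂ * v₂ᴴ = 1 := mul_eq_one_comm.mp hv₂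
  set u : Matrix (Fin 2) (Fin 2) ℂ := v₁ᴴ * v₂ with hu
  have hv2eq : v₂ = v₁ * u := by
    rw [hu, ← Matrix.mul_assoc, hr1, Matrix.one_mul]
  have hcomm : u * pauli3 = pauli3 * u := by
    rw [hinv1, hinv2] at horbit
    calc u * pauli3 = v₁ᴴ * (v₂ * pauli3 * v₂ᴴ) * v₂ := by
          simp [hu, Matrix.mul_assoc, ← Matrix.mul_assoc v₂ᴴ v₂, hv₂]
      _ = v₁ᴴ * (v₁ * pauli3 * v₁ᴴ) * v₂ := by rw [horbit]
      _ = pauli3 * u := by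
          simp [hu, ← Matrix.mul_assoc, hv₁]
  have h01 : u 0 1 = 0 := by
    have := congrFun (congrFun hcomm 0) 1
    simp [pauli3, Matrix.mul_apply, Fin.sum_univ_two] at this
    linear_combination -this / 2
  have h10 : u 1 0 = 0 := by
    have := congrFun (congrFun hcomm 1) 0
    simp [pauli3, Matrix.mul_apply, Fin.sum_univ_two] at this
    linear_combination this / 2
  set a : ℂ := u 0 0 with ha
  set d : ℂ := u 1 1 with hd
  have hdet : a * d = 1 := by
    have : u.det = 1 := by
      rw [hu, Matrix.det_mul, Matrix.det_conjTranspose, hdv₁, hdv₂]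
      simp
    rw [Matrix.det_fin_two, h01, h10] at this
    simpa using this
  have ha0 : a ≠ 0 := by
    intro h; rw [h, zero_mul] at hdet; exact one_ne_zero hdet.symm
  have huu : uᴴ * u = 1 := by
    rw [hu, Matrix.conjTranspose_mul, Matrix.conjTranspose_conjTranspose,
      Matrix.mul_assoc, ← Matrix.mul_assoc v₁ v₁ᴴ, hr1, Matrix.one_mul, hv₂]
  have habs : ‖a‖ = 1 := by
    have h0 := congrFun (congrFun huu 0) 0
    simp [Matrix.mul_apply, Fin.sum_univ_two, Matrix.conjTranspose_apply, h10, ← ha] at h0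
    have hn : Complex.normSq a = 1 := by
      have h := Complex.normSq_eq_conj_mul_self (z := a)
      rw [h0] at h
      exact_mod_cast h
    rw [Complex.norm_def, hn, Real.sqrt_one]
  set α : ℝ := 2 * Complex.arg a with hα
  have hea : Complex.exp (Complex.I * α / 2) = a := by
    rw [hα]
    push_cast
    rw [show Complex.I * (2 * (Complex.arg a : ℂ)) / 2 = (Complex.arg a : ℂ) * Complex.I by ring]
    have := Complex.norm_mul_exp_arg_mul_I a
    rw [habs] at this
    simpa using this
  have hed : Complex.exp (-Complex.I * α / 2) = d := by
    have h1 : Complex.exp (-Complex.I * α / 2) * Complex.exp (Complex.I * α / 2) = 1 := by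
      rw [← Complex.exp_add,
        show -Complex.I * α / 2 + Complex.I * α / 2 = 0 by ring, Complex.exp_zero]
    rw [hea] at h1
    have h2 : Complex.exp (-Complex.I * α / 2) * a = d * a := by
      rw [h1, mul_comm d a, hdet]
    exact mul_right_cancel₀ ha0 h2
  have hueq : u = !![Complex.exp (Complex.I * α / 2), 0; 0, Complex.exp (-Complex.I * α / 2)] := by
    rw [hea, hed]
    ext i j
    fin_cases i <;> fin_cases j <;> simp [h01, h10, ← ha, ← hd]
  have hψ : ψ v₂ = Complex.exp (Complex.I * α / 2) * ψ v₁ := by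
    rw [hv2eq, hueq]
    exact hequiv v₁ hv₁ hdv₁ α
  have hDe : u.mulVec ![0, 1] = d • ![0, 1] := by
    ext i
    fin_cases i <;>
      simp [Matrix.mulVec, dotProduct, Fin.sum_univ_two, h01, h10, ← hd]
  have hvec : v₂.mulVec ![0, 1] = d • v₁.mulVec ![0, 1] := by
    rw [hv2eq, ← Matrix.mulVec_mulVec, hDe, Matrix.mulVec_smul]
  rw [hψ, hvec, hea, smul_smul]
  rw [show a * ψ v₁ * d = (a * d) * ψ v₁ by ring, hdet, one_mul]
end
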